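/- Let S be a finite regular semigroup. Then S is completely regular (every element of S lies in a subgroup of S; equivalently, for every x ∈ S there exists y ∈ S with x*y*x = x and x*y = y*x) if and only if the map f : S → S given by f(x) = x^{ω-1} is a permutation matching of S. -/

import Mathlib

variable {S : Type*}

/-- `b` is an inverse of `a`: `a*b*a = a` and `b*a*b = b`. -/
def IsInverseOf [Semigroup S] (b a : S) : Prop := a * b * a = a ∧ b * a * b = b

/-- `invs a` is the set `V(a)` of inverses of `a`. -/
def invs [Semigroup S] (a : S) : Set S := {b | IsInverseOf b a}

/-- `invsSet A` is `V(A) = ⋃ a ∈ A, V(a)`. -/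
def invsSet [Semigroup S] (A : Set S) : Set S := ⋃ a ∈ A, invs a

/-- A semigroup is regular if every element has an inverse. -/
def IsRegularSemigroup (S : Type*) [Semigroup S] : Prop := ∀ a : S, ∃ b, IsInverseOf b a

/-- A permutation matching: a bijection sending each element to one of its inverses. -/
def IsPermMatching [Semigroup S] (f : S → S) : Prop :=
  Function.Bijective f ∧ ∀ a, f a ∈ invs a

def lSet [Semigroup S] (a : S) : Set S := insert a {x | ∃ s, s * a = x}
def rSet [Semigroup S] (a : S) : Set S := insert a {x | ∃ s, a * s = x}
/-- Green's L relation. -/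
def greenL [Semigroup S] (a b : S) : Prop := lSet a = lSet b
/-- Green's R relation. -/
def greenR [Semigroup S] (a b : S) : Prop := rSet a = rSet b
/-- Green's H relation. -/
def greenH [Semigroup S] (a b : S) : Prop := greenL a b ∧ greenR a b
/-- Green's D relation. -/
def greenD [Semigroup S] (a b : S) : Prop := ∃ c, greenL a c ∧ greenR c b
def dClass [Semigroup S] (a : S) : Set S := {b | greenD a b}
def lClass [Semigroup S] (a : S) : Set S := {b | greenL a b}
def rClass [Semigroup S] (a : S) : Set S := {b | greenR a b}

/-- `spow x n = x^(n+1)` (positive powers in a semigroup). -/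
def spow [Semigroup S] (x : S) : ℕ → S
  | 0 => x
  | n + 1 => spow x n * x

/-- `e` is an idempotent positive power of `x`; in a finite semigroup this
characterises `e = x^ω`. -/
def IsOmega [Semigroup S] (x e : S) : Prop := (∃ k : ℕ, e = spow x k) ∧ e * e = e

/-- `y = x^(ω-1)`: `y = x^m` for the least positive `m` with `x^(m+1)` idempotent
(in a finite semigroup `x^(m+1)` idempotent iff `x^(m+1) = x^ω`). Here `m = k+1`. -/
def IsOmegaMinusOne [Semigroup S] (x y : S) : Prop :=
  ∃ k : ℕ, y = spow x k ∧ spow x (k+1) * spow x (k+1) = spow x (k+1) ∧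
    ∀ j < k, ¬ (spow x (j+1) * spow x (j+1) = spow x (j+1))

section Helpers
variable [Semigroup S]

lemma spow_succ' (x : S) (n : ℕ) : spow x (n+1) = x * spow x n := by
  induction n with
  | zero => rfl
  | succ n ih =>
    show spow x (n+1) * x = x * (spow x n * x)
    rw [ih, mul_assoc]

lemma spow_mul_spow (x : S) (m n : ℕ) : spow x m * spow x n = spow x (m+n+1) := by
  induction n with
  | zero => rfl
  | succ n ih =>
    show spow x m * (spow x n * x) = spow x (m+n+1+1)
    rw [← mul_assoc, ih]; rfl

lemma period_step (x : S) {k : ℕ} (hk : spow x (k+2) = x) :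
    ∀ n, spow x (n + (k+2)) = spow x n := by
  intro n
  induction n with
  | zero => show spow x (0 + (k+2)) = x; simpa using hk
  | succ n ih =>
    have h1 : n + 1 + (k+2) = (n + (k+2)) + 1 := by omega
    rw [h1]
    show spow x (n + (k+2)) * x = spow x (n+1)
    rw [ih]; rfl

lemma period_mult (x : S) {k : ℕ} (hk : spow x (k+2) = x) :
    ∀ t n, spow x (n + t * (k+2)) = spow x n := by
  intro t
  induction t with
  | zero => intro n; simp
  | succ t ih =>
    intro n
    have h1 : n + (t+1) * (k+2) = (n + t * (k+2)) + (k+2) := by ring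
    rw [h1, period_step x hk, ih]

lemma idem_mult (c : S) {p : ℕ} (h : spow c p * spow c p = spow c p) :
    ∀ t, spow c (p + t * (p+1)) = spow c p := by
  intro t
  induction t with
  | zero => simp
  | succ t ih =>
    have h1 : p + (t+1) * (p+1) = (p + t * (p+1)) + p + 1 := by ring
    rw [h1, ← spow_mul_spow, ih, h]

lemma spow_spow (x : S) (k m : ℕ) : spow (spow x k) m = spow x (k*m + k + m) := by
  induction m with
  | zero => show spow x k = spow x (k*0 + k + 0); norm_num
  | succ m ih =>
    show spow (spow x k) m * spow x k = _
    rw [ih, spow_mul_spow]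
    congr 1; ring

lemma cr_period {x y : S} (hy1 : x * y * x = x) (hy2 : x * y = y * x)
    {k : ℕ} (hidem : spow x (k+1) * spow x (k+1) = spow x (k+1)) :
    spow x (k+2) = x := by
  have hxe : x * (x*y) = x := by rw [hy2, ← mul_assoc, hy1]
  have he : (x*y) * (x*y) = x*y := by rw [← mul_assoc, hy1]
  have hxy : ∀ n, x * spow y n = spow y n * x := by
    intro n; induction n with
    | zero => exact hy2
    | succ n ih =>
      show x * (spow y n * y) = spow y n * y * x
      rw [← mul_assoc, ih, mul_assoc, hy2, ← mul_assoc]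
  have key : ∀ n, spow x n * spow y n = x * y := by
    intro n; induction n with
    | zero => rfl
    | succ n ih =>
      show spow x n * x * (spow y n * y) = x * y
      calc spow x n * x * (spow y n * y)
          = spow x n * (x * spow y n) * y := by simp [mul_assoc]
        _ = spow x n * (spow y n * x) * y := by rw [hxy n]
        _ = (spow x n * spow y n) * (x * y) := by simp [mul_assoc]
        _ = (x * y) * (x * y) := by rw [ih]
        _ = x * y := he
  have habs : ∀ m, spow x m * (x*y) = spow x m := by
    intro m; induction m with
    | zero => exact hxe
    | succ m ih =>
      show spow x m * x * (x*y) = spow x m * x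
      rw [mul_assoc, hxe]
  have h2 : spow x (2*k+3) = spow x (k+1) := by
    have := spow_mul_spow x (k+1) (k+1)
    rw [hidem] at this
    have he2 : k+1+(k+1)+1 = 2*k+3 := by omega
    rw [he2] at this; exact this.symm
  calc spow x (k+2) = spow x (k+2) * (x*y) := (habs (k+2)).symm
    _ = spow x (k+2) * (spow x k * spow y k) := by rw [key k]
    _ = (spow x (k+2) * spow x k) * spow y k := by rw [mul_assoc]
    _ = spow x (2*k+3) * spow y k := by rw [spow_mul_spow]; ring_nf
    _ = spow x (k+1) * spow y k := by rw [h2]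
    _ = (x * spow x k) * spow y k := by rw [spow_succ']
    _ = x * (spow x k * spow y k) := by rw [mul_assoc]
    _ = x * (x * y) := by rw [key k]
    _ = x := hxe

end Helpers

/-- Theorem 2.1(i). A finite regular semigroup is completely regular
iff the map `x ↦ x^(ω-1)` is a permutation matching. -/
theorem stmt_6 (S : Type*) [Semigroup S] [Fintype S]
    (hreg : IsRegularSemigroup S)
    (f : S → S) (hf : ∀ x : S, IsOmegaMinusOne x (f x)) :
    (∀ x : S, ∃ y : S, x * y * x = x ∧ x * y = y * x) ↔ IsPermMatching f := by
  constructor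
  · intro h
    have key : ∀ x : S, ∃ k : ℕ, f x = spow x k ∧
        spow x (k+1) * spow x (k+1) = spow x (k+1) ∧ spow x (k+2) = x := by
      intro x
      obtain ⟨k, hfx, hidem, -⟩ := hf x
      obtain ⟨y, hy1, hy2⟩ := h x
      exact ⟨k, hfx, hidem, cr_period hy1 hy2 hidem⟩
    have hmatch : ∀ a : S, f a ∈ invs a := by
      intro a
      obtain ⟨k, hfa, -, hk⟩ := key a
      constructor
      · show a * f a * a = a
        rw [hfa, ← spow_succ']
        exact hk
      · show f a * a * f a = f a
        rw [hfa]
        show spow a (k+1) * spow a k = spow a k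
        rw [spow_mul_spow]
        have h2 : k+1+k+1 = k + (k+2) := by omega
        rw [h2]
        exact period_step a hk k
    refine ⟨Finite.injective_iff_bijective.mp ?_, hmatch⟩
    intro a b hab
    obtain ⟨ka, hfa, hia, hpa⟩ := key a
    obtain ⟨kb, hfb, hib, hpb⟩ := key b
    have hcb : f a = spow b kb := hab.trans hfb
    have epa : spow (f a) (ka+1) = spow a (ka+1) := by
      rw [hfa, spow_spow]
      have h1 : ka*(ka+1) + ka + (ka+1) = (ka+1) + ka*(ka+2) := by ring
      rw [h1]
      exact period_mult a hpa ka (ka+1)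
    have epb : spow (f a) (kb+1) = spow b (kb+1) := by
      rw [hcb, spow_spow]
      have h1 : kb*(kb+1) + kb + (kb+1) = (kb+1) + kb*(kb+2) := by ring
      rw [h1]
      exact period_mult b hpb kb (kb+1)
    have ia : spow (f a) (ka+1) * spow (f a) (ka+1) = spow (f a) (ka+1) := by
      rw [epa]; exact hia
    have ib : spow (f a) (kb+1) * spow (f a) (kb+1) = spow (f a) (kb+1) := by
      rw [epb]; exact hib
    have e1 : spow (f a) ((ka+1) + (kb+1) * (ka+1+1)) = spow (f a) (ka+1) :=
      idem_mult _ ia (kb+1)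
    have e2 : spow (f a) ((kb+1) + (ka+1) * (kb+1+1)) = spow (f a) (kb+1) :=
      idem_mult _ ib (ka+1)
    have hexp : (ka+1) + (kb+1) * (ka+1+1) = (kb+1) + (ka+1) * (kb+1+1) := by ring
    have heq : spow a (ka+1) = spow b (kb+1) := by
      rw [← epa, ← epb, ← e1, ← e2, hexp]
    calc a = spow a (ka+1) * a := hpa.symm
      _ = spow b (kb+1) * a := by rw [heq]
      _ = (b * spow b kb) * a := by rw [← spow_succ']
      _ = (b * f a) * a := by rw [← hcb]
      _ = b * (f a * a) := by rw [mul_assoc]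
      _ = b * (spow a ka * a) := by rw [hfa]
      _ = b * spow a (ka+1) := rfl
      _ = b * spow b (kb+1) := by rw [heq]
      _ = spow b (kb+2) := (spow_succ' b (kb+1)).symm
      _ = b := hpb
  · intro hpm x
    refine ⟨f x, (hpm.2 x).1, ?_⟩
    obtain ⟨k, hfx, -⟩ := hf x
    rw [hfx]
    exact (spow_succ' x k).symm
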